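/- For every Haar wavelet ψ_{j,k} on [0,1] and every ε > 0, there exist three functions of the form g_i(s) = B_i · exp(−λ_i ∫_s^1 softplus(w_i r + b_i) dr) (with real parameters B_i, λ_i ≥ 0, w_i, b_i) such that |ψ_{j,k}(s) − (g_1(s) + g_3(s) − 2 g_2(s))| < ε for all s ∈ [0,1] at distance at least ε from the three breakpoints 2^{−j}k, 2^{−j}k + 2^{−(j+1)}, 2^{−j}(k+1). -/

import Mathlib

open Filter MeasureTheory

noncomputable def softplus (x : ℝ) : ℝ := Real.log (1 + Real.exp x)

noncomputable def haarMother (s : ℝ) : ℝ :=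
  (if s ∈ Set.Ico (0:ℝ) (1/2) then (1:ℝ) else 0) -
  (if s ∈ Set.Icc (1/2:ℝ) 1 then (1:ℝ) else 0)

noncomputable def haar (j k : ℕ) (s : ℝ) : ℝ :=
  (2:ℝ) ^ ((j:ℝ)/2) * haarMother ((2:ℝ)^(j:ℕ) * s - k)

/-- Mamba basis function with time positional encoding. -/
noncomputable def mambaBasis (B lam w b : ℝ) (s : ℝ) : ℝ :=
  B * Real.exp (-(lam * ∫ r in s..(1:ℝ), softplus (w * r + b)))

lemma softplus_nonneg (x : ℝ) : 0 ≤ softplus x := by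
  unfold softplus
  have := Real.exp_pos x
  have h : (1:ℝ) ≤ 1 + Real.exp x := by linarith
  simpa using Real.log_nonneg h

lemma le_softplus (x : ℝ) : x ≤ softplus x := by
  unfold softplus
  have h := Real.exp_pos x
  calc x = Real.log (Real.exp x) := (Real.log_exp x).symm
    _ ≤ Real.log (1 + Real.exp x) := Real.log_le_log (by positivity) (by linarith)

lemma softplus_le_exp (x : ℝ) : softplus x ≤ Real.exp x := by
  unfold softplus
  have h := Real.exp_pos x
  calc Real.log (1 + Real.exp x) ≤ 1 + Real.exp x - 1 :=
        Real.log_le_sub_one_of_pos (by positivity)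
    _ = Real.exp x := by ring

lemma softplus_continuous : Continuous softplus :=
  (continuous_const.add Real.continuous_exp).log (fun x => by show (1:ℝ) + Real.exp x ≠ 0; positivity)

lemma spInt (M c a b : ℝ) :
    IntervalIntegrable (fun r => softplus ((-M) * r + M * c)) volume a b :=
  ((softplus_continuous.comp (by continuity)).intervalIntegrable a b)

lemma F_lower (M c ε s : ℝ) (hM : 0 < M) (hε : 0 < ε) (hc : c ≤ 1) (hs : s ≤ c - ε) :
    M * ε ^ 2 / 4 ≤ ∫ r in s..1, softplus ((-M) * r + M * c) := by
  have h1 : (∫ r in (c - ε)..(c - ε/2), softplus ((-M) * r + M * c)) ≤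
      ∫ r in s..1, softplus ((-M) * r + M * c) := by
    apply intervalIntegral.integral_mono_interval hs (by linarith) (by linarith)
    · exact Eventually.of_forall fun r => softplus_nonneg _
    · exact spInt M c s 1
  have h2 : (∫ r in (c - ε)..(c - ε/2), (M * ε / 2 : ℝ)) ≤
      ∫ r in (c - ε)..(c - ε/2), softplus ((-M) * r + M * c) := by
    apply intervalIntegral.integral_mono_on (by linarith)
      (intervalIntegrable_const) (spInt M c _ _)
    intro x hx
    have hx2 : x ≤ c - ε/2 := hx.2
    calc M * ε / 2 ≤ (-M) * x + M * c := by nlinarith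
      _ ≤ softplus ((-M) * x + M * c) := le_softplus _
  have h3 : (∫ r in (c - ε)..(c - ε/2), (M * ε / 2 : ℝ)) = M * ε ^ 2 / 4 := by
    rw [intervalIntegral.integral_const]
    simp only [smul_eq_mul]
    ring
  linarith

lemma F_upper (M c ε s : ℝ) (hM : 0 < M) (hs0 : 0 ≤ s) (hs1 : s ≤ 1) (hs : c + ε ≤ s) :
    (∫ r in s..1, softplus ((-M) * r + M * c)) ≤ Real.exp (-(M * ε)) := by
  have h2 : (∫ r in s..1, softplus ((-M) * r + M * c)) ≤
      ∫ r in s..1, (Real.exp (-(M * ε)) : ℝ) := by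
    apply intervalIntegral.integral_mono_on hs1 (spInt M c _ _) intervalIntegrable_const
    intro x hx
    have hx1 : s ≤ x := hx.1
    calc softplus ((-M) * x + M * c) ≤ Real.exp ((-M) * x + M * c) := softplus_le_exp _
      _ ≤ Real.exp (-(M * ε)) := Real.exp_le_exp.mpr (by nlinarith)
  have h3 : (∫ r in s..1, (Real.exp (-(M * ε)) : ℝ)) = (1 - s) * Real.exp (-(M * ε)) := by
    rw [intervalIntegral.integral_const]; simp
  have h4 := Real.exp_pos (-(M * ε))
  nlinarith

lemma key (A δ ε : ℝ) (hA : 0 < A) (hδ : 0 < δ) (hε : 0 < ε) :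
    ∃ M : ℝ, ∀ c s : ℝ, c ≤ 1 → 0 ≤ s → s ≤ 1 →
      (0 ≤ mambaBasis A 1 (-M) (M * c) s) ∧
      (mambaBasis A 1 (-M) (M * c) s ≤ A) ∧
      (s ≤ c - ε → mambaBasis A 1 (-M) (M * c) s ≤ δ) ∧
      (c + ε ≤ s → A - δ ≤ mambaBasis A 1 (-M) (M * c) s) := by
  obtain ⟨L, hLdef⟩ : ∃ L : ℝ, L = max (Real.log (A / δ)) 0 + 1 := ⟨_, rfl⟩
  have hL1 : 1 ≤ L := by
    have := le_max_right (Real.log (A / δ)) 0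
    rw [hLdef]; linarith
  have hLlog : Real.log (A / δ) ≤ L := by
    have := le_max_left (Real.log (A / δ)) 0
    rw [hLdef]; linarith
  obtain ⟨M, hMdef⟩ : ∃ M : ℝ, M = 4 * L / ε ^ 2 + L / ε := ⟨_, rfl⟩
  have hM : 0 < M := by rw [hMdef]; positivity
  have he1 : L ≤ M * ε ^ 2 / 4 := by
    have e : M * ε ^ 2 / 4 = L + L * ε / 4 := by
      rw [hMdef]; field_simp
    nlinarith [mul_nonneg (by linarith : (0:ℝ) ≤ L) hε.le]
  have he2 : L ≤ M * ε := by
    have e : M * ε = 4 * L / ε + L := by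
      rw [hMdef]; field_simp
    have h0 : 0 ≤ 4 * L / ε := by positivity
    linarith
  have hkey : ∀ x : ℝ, L ≤ x → A * Real.exp (-x) ≤ δ := by
    intro x hx
    have h2 : Real.exp (-x) ≤ δ / A := by
      rw [show δ / A = Real.exp (Real.log (δ / A)) from (Real.exp_log (by positivity)).symm]
      apply Real.exp_le_exp.mpr
      have hlog2 : Real.log (δ / A) = -Real.log (A / δ) := by
        rw [← Real.log_inv, inv_div]
      rw [hlog2]; linarith
    calc A * Real.exp (-x) ≤ A * (δ / A) := mul_le_mul_of_nonneg_left h2 hA.le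
      _ = δ := by field_simp
  refine ⟨M, fun c s hc hs0 hs1 => ?_⟩
  obtain ⟨F, hFdef⟩ : ∃ F : ℝ, F = ∫ r in s..1, softplus ((-M) * r + M * c) := ⟨_, rfl⟩
  have hF0 : 0 ≤ F := by
    rw [hFdef]
    exact intervalIntegral.integral_nonneg hs1 fun u _ => softplus_nonneg _
  have hmb : mambaBasis A 1 (-M) (M * c) s = A * Real.exp (-F) := by
    rw [hFdef]; simp only [mambaBasis, one_mul]
  have hexp := Real.exp_pos (-F)
  have hexple : Real.exp (-F) ≤ 1 := Real.exp_le_one_iff.mpr (by linarith)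
  refine ⟨by rw [hmb]; positivity, by rw [hmb]; nlinarith, ?_, ?_⟩
  · intro hsc
    have hFl : M * ε ^ 2 / 4 ≤ F := by
      rw [hFdef]; exact F_lower M c ε s hM hε hc hsc
    rw [hmb]
    calc A * Real.exp (-F) ≤ A * Real.exp (-(M * ε ^ 2 / 4)) :=
          mul_le_mul_of_nonneg_left (Real.exp_le_exp.mpr (by linarith)) hA.le
      _ ≤ δ := hkey _ he1
  · intro hsc
    have hFu : F ≤ Real.exp (-(M * ε)) := by
      rw [hFdef]; exact F_upper M c ε s hM hs0 hs1 hsc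
    have hone : 1 - F ≤ Real.exp (-F) := by
      have := Real.add_one_le_exp (-F); linarith
    have hAF : A * F ≤ δ := by
      calc A * F ≤ A * Real.exp (-(M * ε)) :=
            mul_le_mul_of_nonneg_left (by linarith) hA.le
        _ ≤ δ := hkey _ he2
    rw [hmb]
    nlinarith

lemma haarMother_neg (t : ℝ) (h : t < 0) : haarMother t = 0 := by
  unfold haarMother
  rw [if_neg (by rintro ⟨a, b⟩; linarith), if_neg (by rintro ⟨a, b⟩; linarith)]
  ring

lemma haarMother_one (t : ℝ) (h0 : 0 ≤ t) (h1 : t < 1/2) : haarMother t = 1 := by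
  unfold haarMother
  rw [if_pos ⟨h0, h1⟩, if_neg (by rintro ⟨a, b⟩; linarith)]
  ring

lemma haarMother_negone (t : ℝ) (h0 : 1/2 ≤ t) (h1 : t ≤ 1) : haarMother t = -1 := by
  unfold haarMother
  rw [if_neg (by rintro ⟨a, b⟩; linarith), if_pos ⟨h0, h1⟩]
  ring

lemma haarMother_gt (t : ℝ) (h : 1 < t) : haarMother t = 0 := by
  unfold haarMother
  rw [if_neg (by rintro ⟨a, b⟩; linarith), if_neg (by rintro ⟨a, b⟩; linarith)]
  ring

theorem stmt3 (j k : ℕ) (hk : k ≤ 2^j - 1) (ε : ℝ) (hε : 0 < ε) :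
    ∃ B₁ B₂ B₃ lam₁ lam₂ lam₃ w₁ w₂ w₃ b₁ b₂ b₃ : ℝ,
      0 ≤ lam₁ ∧ 0 ≤ lam₂ ∧ 0 ≤ lam₃ ∧
      ∀ s ∈ Set.Icc (0:ℝ) 1,
        ε ≤ |s - (2:ℝ)^(-(j:ℝ)) * k| →
        ε ≤ |s - ((2:ℝ)^(-(j:ℝ)) * k + (2:ℝ)^(-((j:ℝ)+1)))| →
        ε ≤ |s - (2:ℝ)^(-(j:ℝ)) * (k+1)| →
        |haar j k s -
          (mambaBasis B₁ lam₁ w₁ b₁ s + mambaBasis B₃ lam₃ w₃ b₃ s -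
            2 * mambaBasis B₂ lam₂ w₂ b₂ s)| < ε := by
  obtain ⟨A, hAdef⟩ : ∃ A : ℝ, A = (2:ℝ) ^ ((j:ℝ)/2) := ⟨_, rfl⟩
  have hA : 0 < A := by rw [hAdef]; exact Real.rpow_pos_of_pos (by norm_num) _
  obtain ⟨P, hPdef⟩ : ∃ P : ℝ, P = (2:ℝ) ^ (j:ℕ) := ⟨_, rfl⟩
  have hP : 0 < P := by rw [hPdef]; positivity
  have hr1 : (2:ℝ) ^ (-(j:ℝ)) = P⁻¹ := by
    rw [hPdef, Real.rpow_neg (by norm_num), Real.rpow_natCast]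
  have hr2 : (2:ℝ) ^ (-((j:ℝ)+1)) = P⁻¹ / 2 := by
    have e : -((j:ℝ)+1) = -(((j+1:ℕ):ℝ)) := by push_cast; ring
    rw [e, Real.rpow_neg (by norm_num), Real.rpow_natCast, pow_succ, hPdef, mul_inv]
    ring
  obtain ⟨c1, hc1def⟩ : ∃ x : ℝ, x = (2:ℝ)^(-(j:ℝ)) * k := ⟨_, rfl⟩
  obtain ⟨c2, hc2def⟩ : ∃ x : ℝ, x = (2:ℝ)^(-(j:ℝ)) * k + (2:ℝ)^(-((j:ℝ)+1)) := ⟨_, rfl⟩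
  obtain ⟨c3, hc3def⟩ : ∃ x : ℝ, x = (2:ℝ)^(-(j:ℝ)) * ((k:ℝ)+1) := ⟨_, rfl⟩
  have hPc1 : P * c1 = k := by rw [hc1def, hr1]; field_simp
  have hPc2 : P * c2 = k + 1/2 := by rw [hc2def, hr1, hr2]; field_simp
  have hPc3 : P * c3 = k + 1 := by rw [hc3def, hr1]; field_simp
  have hkP : (k:ℝ) + 1 ≤ P := by
    have hk' : k + 1 ≤ 2^j := by
      have : 1 ≤ 2^j := Nat.one_le_two_pow
      omega
    have h := (Nat.cast_le (α := ℝ)).mpr hk'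
    push_cast at h
    rw [hPdef]; linarith
  have hc3le : c3 ≤ 1 := by
    have h : P * c3 ≤ P * 1 := by rw [hPc3, mul_one]; linarith
    exact le_of_mul_le_mul_left h hP
  have hc12 : c1 < c2 := by
    have h : P * c1 < P * c2 := by rw [hPc1, hPc2]; linarith
    exact lt_of_mul_lt_mul_left h hP.le
  have hc23 : c2 < c3 := by
    have h : P * c2 < P * c3 := by rw [hPc2, hPc3]; linarith
    exact lt_of_mul_lt_mul_left h hP.le
  have hc1le : c1 ≤ 1 := by linarith
  have hc2le : c2 ≤ 1 := by linarith
  obtain ⟨δ, hδdef⟩ : ∃ x : ℝ, x = ε / 8 := ⟨_, rfl⟩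
  have hδ : 0 < δ := by rw [hδdef]; positivity
  have hδε : 8 * δ = ε := by rw [hδdef]; ring
  obtain ⟨M, hM⟩ := key A δ ε hA hδ hε
  refine ⟨A, A, A, 1, 1, 1, -M, -M, -M, M * c1, M * c2, M * c3,
    by norm_num, by norm_num, by norm_num, ?_⟩
  rintro s ⟨hs0, hs1⟩ h1 h2 h3
  rw [← hc1def] at h1
  rw [← hc2def] at h2
  rw [show (2:ℝ)^(-(j:ℝ)) * ((k:ℝ)+1) = c3 from hc3def.symm] at h3
  obtain ⟨hg1a, hg1b, hg1c, hg1d⟩ := hM c1 s hc1le hs0 hs1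
  obtain ⟨hg2a, hg2b, hg2c, hg2d⟩ := hM c2 s hc2le hs0 hs1
  obtain ⟨hg3a, hg3b, hg3c, hg3d⟩ := hM c3 s hc3le hs0 hs1
  obtain ⟨g1, hg1e⟩ : ∃ x : ℝ, x = mambaBasis A 1 (-M) (M * c1) s := ⟨_, rfl⟩
  obtain ⟨g2, hg2e⟩ : ∃ x : ℝ, x = mambaBasis A 1 (-M) (M * c2) s := ⟨_, rfl⟩
  obtain ⟨g3, hg3e⟩ : ∃ x : ℝ, x = mambaBasis A 1 (-M) (M * c3) s := ⟨_, rfl⟩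
  rw [← hg1e] at hg1a hg1b hg1c hg1d ⊢
  rw [← hg2e] at hg2a hg2b hg2c hg2d ⊢
  rw [← hg3e] at hg3a hg3b hg3c hg3d ⊢
  have hhaar : haar j k s = A * haarMother (P * s - k) := by
    rw [hAdef, hPdef]; rfl
  clear hM hg1e hg2e hg3e hAdef hPdef hr1 hr2 hc1def hc2def hc3def hδdef hkP hk
  have hPε : 0 < P * ε := by positivity
  rcases le_abs.mp h1 with h1l | h1r
  · -- c1 + ε ≤ s
    have hs_c1 : c1 + ε ≤ s := by linarith
    rcases le_abs.mp h2 with h2l | h2r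
    · -- c2 + ε ≤ s
      have hs_c2 : c2 + ε ≤ s := by linarith
      rcases le_abs.mp h3 with h3l | h3r
      · -- region 4 : s ≥ c3 + ε, haar = 0
        have hs_c3 : c3 + ε ≤ s := by linarith
        have ht : (1:ℝ) < P * s - k := by
          have h := mul_le_mul_of_nonneg_left hs_c3 hP.le
          linarith
        rw [hhaar, haarMother_gt _ ht, mul_zero, abs_lt]
        have e1 := hg1d hs_c1
        have e2 := hg2d hs_c2
        have e3 := hg3d hs_c3
        constructor <;> linarith
      · -- region 3 : c2 + ε ≤ s ≤ c3 - ε, haar = -A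
        have hs_c3 : s ≤ c3 - ε := by linarith
        have htlo : (1/2 : ℝ) ≤ P * s - k := by
          have h := mul_le_mul_of_nonneg_left hs_c2 hP.le
          linarith
        have hthi : P * s - k ≤ 1 := by
          have h := mul_le_mul_of_nonneg_left hs_c3 hP.le
          linarith
        rw [hhaar, haarMother_negone _ htlo hthi, mul_neg_one, abs_lt]
        have e1 := hg1d hs_c1
        have e2 := hg2d hs_c2
        have e3 := hg3c hs_c3
        constructor <;> linarith
    · -- region 2 : c1 + ε ≤ s ≤ c2 - ε, haar = A
      have hs_c2 : s ≤ c2 - ε := by linarith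
      have hs_c3 : s ≤ c3 - ε := by
        rcases le_abs.mp h3 with h3l | h3r
        · linarith
        · linarith
      have htlo : (0:ℝ) ≤ P * s - k := by
        have h := mul_le_mul_of_nonneg_left hs_c1 hP.le
        linarith
      have hthi : P * s - k < 1/2 := by
        have h := mul_le_mul_of_nonneg_left hs_c2 hP.le
        linarith
      rw [hhaar, haarMother_one _ htlo hthi, mul_one, abs_lt]
      have e1 := hg1d hs_c1
      have e2 := hg2c hs_c2
      have e3 := hg3c hs_c3
      constructor <;> linarith
  · -- region 1 : s ≤ c1 - ε, haar = 0
    have hs_c1 : s ≤ c1 - ε := by linarith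
    have hs_c2 : s ≤ c2 - ε := by linarith
    have hs_c3 : s ≤ c3 - ε := by linarith
    have ht : P * s - k < 0 := by
      have h := mul_le_mul_of_nonneg_left hs_c1 hP.le
      linarith
    rw [hhaar, haarMother_neg _ ht, mul_zero, abs_lt]
    have e1 := hg1c hs_c1
    have e2 := hg2c hs_c2
    have e3 := hg3c hs_c3
    constructor <;> linarith
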